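/- Let C ⊆ F_3^k be a complete capset, and let C' = C × {0, 1} = {(v, t) : v ∈ C, t ∈ {0, 1}} ⊆ F_3^k × F_3 ≅ F_3^{k+1}. Then C' is a complete capset in F_3^{k+1}, and |C'| = 2|C|. -/

import Mathlib

/-- Let `C ⊆ F_3^k` be a complete capset and `C' = C × {0, 1} ⊆ F_3^k × F_3`.
Then `C'` is a complete capset in `F_3^{k+1}` and `|C'| = 2|C|`. -/
theorem product_complete_capset (k : ℕ) (C : Set (Fin k → ZMod 3))
    (hcap : ∀ P ∈ C, ∀ Q ∈ C, ∀ R ∈ C,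
      P ≠ Q → P ≠ R → Q ≠ R → P + Q + R ≠ 0)
    (hcomplete : ∀ P : Fin k → ZMod 3, P ∉ C →
      ∃ Q ∈ C, ∃ R ∈ C, Q ≠ R ∧ P + Q + R = 0)
    (C' : Set ((Fin k → ZMod 3) × ZMod 3))
    (hC' : C' = {p : (Fin k → ZMod 3) × ZMod 3 |
      p.1 ∈ C ∧ (p.2 = 0 ∨ p.2 = 1)}) :
    (∀ P ∈ C', ∀ Q ∈ C', ∀ R ∈ C',
      P ≠ Q → P ≠ R → Q ≠ R → P + Q + R ≠ 0) ∧
    (∀ P : (Fin k → ZMod 3) × ZMod 3, P ∉ C' →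
      ∃ Q ∈ C', ∃ R ∈ C', Q ≠ R ∧ P + Q + R = 0) ∧
    C'.ncard = 2 * C.ncard := by
  subst hC'
  refine ⟨?_, ?_, ?_⟩
  · rintro P ⟨hP1, hP2⟩ Q ⟨hQ1, hQ2⟩ R ⟨hR1, hR2⟩ hPQ hPR hQR hsum
    have hsum1 : P.1 + Q.1 + R.1 = 0 := congrArg Prod.fst hsum
    have hsum2 : P.2 + Q.2 + R.2 = 0 := congrArg Prod.snd hsum
    -- second coordinates all equal
    have heq : P.2 = Q.2 ∧ Q.2 = R.2 := by
      rcases hP2 with h | h <;> rcases hQ2 with h' | h' <;> rcases hR2 with h'' | h'' <;>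
        (simp [h, h', h''] at hsum2 ⊢) <;> (revert hsum2; decide)
    have h1 : P.1 ≠ Q.1 := fun h => hPQ (Prod.ext h heq.1)
    have h2 : P.1 ≠ R.1 := fun h => hPR (Prod.ext h (heq.1.trans heq.2))
    have h3 : Q.1 ≠ R.1 := fun h => hQR (Prod.ext h heq.2)
    exact hcap P.1 hP1 Q.1 hQ1 R.1 hR1 h1 h2 h3 hsum1
  · rintro ⟨v, t⟩ hP
    simp only [Set.mem_setOf_eq, not_and_or] at hP
    by_cases hv : v ∈ C
    · have ht : t = 2 := by
        rcases hP with h | h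
        · exact absurd hv h
        · push_neg at h
          revert h; revert t; decide
      refine ⟨(v, 0), ⟨hv, Or.inl rfl⟩, (v, 1), ⟨hv, Or.inr rfl⟩, ?_, ?_⟩
      · simp
      · refine Prod.ext ?_ ?_
        · show v + v + v = 0
          funext i
          show v i + v i + v i = 0
          have : (3 : ZMod 3) = 0 := rfl
          ring_nf
          rw [show (v i * 3) = v i * 3 from rfl]
          simp [this]
        · show t + 0 + 1 = 0
          rw [ht]; rfl
    · obtain ⟨Q0, hQ0, R0, hR0, hne, hsum⟩ := hcomplete v hv
      have : ∃ a b : ZMod 3, (a = 0 ∨ a = 1) ∧ (b = 0 ∨ b = 1) ∧ t + a + b = 0 := by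
        fin_cases t
        · exact ⟨0, 0, Or.inl rfl, Or.inl rfl, rfl⟩
        · exact ⟨1, 1, Or.inr rfl, Or.inr rfl, rfl⟩
        · exact ⟨0, 1, Or.inl rfl, Or.inr rfl, rfl⟩
      obtain ⟨a, b, ha, hb, hab⟩ := this
      refine ⟨(Q0, a), ⟨hQ0, ha⟩, (R0, b), ⟨hR0, hb⟩, ?_, ?_⟩
      · intro h; exact hne (congrArg Prod.fst h)
      · exact Prod.ext hsum hab
  · have hset : {p : (Fin k → ZMod 3) × ZMod 3 | p.1 ∈ C ∧ (p.2 = 0 ∨ p.2 = 1)}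
        = C ×ˢ ({0, 1} : Set (ZMod 3)) := by
      ext p; simp [Set.mem_prod]
    rw [hset]
    have h2 : ({0, 1} : Set (ZMod 3)).ncard = 2 := by
      rw [Set.ncard_pair (by decide)]
    calc (C ×ˢ ({0, 1} : Set (ZMod 3))).ncard
        = Nat.card ↥(C ×ˢ ({0, 1} : Set (ZMod 3))) := (Nat.card_coe_set_eq _).symm
      _ = Nat.card (↥C × ↥({0, 1} : Set (ZMod 3))) := Nat.card_congr (Equiv.Set.prod _ _)
      _ = Nat.card ↥C * Nat.card ↥({0, 1} : Set (ZMod 3)) := Nat.card_prod _ _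
      _ = C.ncard * 2 := by
          rw [Nat.card_coe_set_eq, Nat.card_coe_set_eq, h2]
      _ = 2 * C.ncard := mul_comm _ _
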